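/- arXiv:1705.06958 — 10 statements merged into one kernel-verified Lean document; each statement's English description precedes it below -/
import Mathlib

section
/- If A is a skew brace such that λ_a(a) = a for all a ∈ A, then A is a two-sided skew brace, i.e., (a·b)∘c = (a∘c)·c⁻¹·(b∘c) for all a,b,c ∈ A. -/
/-- A skew brace: a set `A` with two group operations, the "additive" one given by
the ambient `Group A` instance (written multiplicatively, `·`), and a second group
operation `circ` (`∘`) with identity `cone` and inverses `cinv`, satisfying the
compatibility `a ∘ (b · c) = (a ∘ b) · a⁻¹ · (a ∘ c)`. -/
structure SkewBrace (A : Type*) [Group A] where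
  circ : A → A → A
  circ_assoc : ∀ a b c : A, circ (circ a b) c = circ a (circ b c)
  cone : A
  cone_circ : ∀ a : A, circ cone a = a
  circ_cone : ∀ a : A, circ a cone = a
  cinv : A → A
  cinv_circ : ∀ a : A, circ (cinv a) a = cone
  circ_cinv : ∀ a : A, circ a (cinv a) = cone
  compat : ∀ a b c : A, circ a (b * c) = circ a b * a⁻¹ * circ a c


/-- If `lambda_a a = a` for all `a`, then the skew brace is two-sided:
`(a·b) ∘ c = (a∘c) · c⁻¹ · (b∘c)`. -/
theorem skewBrace_twoSided_of_lambda_fix {A : Type*} [Group A] (B : SkewBrace A)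
    (h : ∀ a : A, a⁻¹ * B.circ a a = a) :
    ∀ a b c : A, B.circ (a * b) c = B.circ a c * c⁻¹ * B.circ b c := by
  -- a ∘ 1 = a
  have hone : ∀ a : A, B.circ a 1 = a := by
    intro a
    have := B.compat a 1 1
    rw [one_mul] at this
    -- circ a 1 = circ a 1 * a⁻¹ * circ a 1
    have h2 : a⁻¹ * B.circ a 1 = 1 := by
      have := mul_left_cancel (a := B.circ a 1)
        (b := a⁻¹ * B.circ a 1) (c := 1) (by rw [← mul_assoc, ← this, mul_one])
      exact this
    calc B.circ a 1 = a * (a⁻¹ * B.circ a 1) := by group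
    _ = a * 1 := by rw [h2]
    _ = a := mul_one a
  -- cone = 1
  have hcone : B.cone = 1 := by
    have h1 := hone B.cone
    have h2 := B.cone_circ (1 : A)
    rw [h2] at h1; exact h1.symm
  -- a ∘ a = a * a
  have hsq : ∀ a : A, B.circ a a = a * a := by
    intro a
    have := h a
    calc B.circ a a = a * (a⁻¹ * B.circ a a) := by group
    _ = a * a := by rw [this]
  -- a ∘ a⁻¹ = 1
  have hinv : ∀ a : A, B.circ a a⁻¹ = 1 := by
    intro a
    have := B.compat a a a⁻¹
    rw [mul_inv_cancel, hone, hsq] at this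
    have : a * B.circ a a⁻¹ = a := by
      calc a * B.circ a a⁻¹ = a * a * a⁻¹ * B.circ a a⁻¹ := by group
      _ = a := this.symm
    calc B.circ a a⁻¹ = a⁻¹ * (a * B.circ a a⁻¹) := by group
    _ = a⁻¹ * a := by rw [this]
    _ = 1 := by group
  have honeL : ∀ a : A, B.circ 1 a = a := by
    intro a; rw [← hcone]; exact B.cone_circ a
  have hinv' : ∀ a : A, B.circ a⁻¹ a = 1 := by
    intro a; have := hinv a⁻¹; rwa [inv_inv] at this
  -- cancellation for circ
  have hcancel : ∀ z w w' : A, B.circ z w = B.circ z w' → w = w' := by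
    intro z w w' hz
    have h1 : B.circ (B.cinv z) (B.circ z w) = w := by
      rw [← B.circ_assoc, B.cinv_circ, B.cone_circ]
    have h2 : B.circ (B.cinv z) (B.circ z w') = w' := by
      rw [← B.circ_assoc, B.cinv_circ, B.cone_circ]
    rw [← h1, hz, h2]
  -- (x ∘ c)⁻¹ = c⁻¹ ∘ x⁻¹
  have hcircinv : ∀ x c : A, (B.circ x c)⁻¹ = B.circ c⁻¹ x⁻¹ := by
    intro x c
    have key : B.circ (B.circ x c) (B.circ c⁻¹ x⁻¹) = 1 := by
      rw [B.circ_assoc, ← B.circ_assoc c c⁻¹, hinv, honeL, hinv]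
    have key2 : B.circ (B.circ x c) (B.circ x c)⁻¹ = 1 := hinv _
    exact (hcancel _ _ _ (key2.trans key.symm))
  -- left identity: c ∘ (u * c * v) = (c∘u) * (c∘v)
  have hLD : ∀ c u v : A, B.circ c (u * c * v) = B.circ c u * B.circ c v := by
    intro c u v
    rw [mul_assoc, B.compat, B.compat, hsq]
    group
  -- right identity: (u * c * v) ∘ c = (u∘c) * (v∘c)
  have hRD : ∀ c u v : A, B.circ (u * c * v) c = B.circ u c * B.circ v c := by
    intro c u v
    have : (B.circ (u * c * v) c)⁻¹ = (B.circ u c * B.circ v c)⁻¹ := by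
      rw [hcircinv]
      have : (u * c * v)⁻¹ = v⁻¹ * c⁻¹ * u⁻¹ := by group
      rw [this, hLD, ← hcircinv, ← hcircinv]
      group
    exact inv_injective this
  intro a b c
  have key : B.circ (c⁻¹ * b) c = c⁻¹ * B.circ b c := by
    have : (B.circ (c⁻¹ * b) c)⁻¹ = (c⁻¹ * B.circ b c)⁻¹ := by
      rw [hcircinv]
      have : (c⁻¹ * b)⁻¹ = b⁻¹ * c := by group
      rw [this, B.compat, hinv', ← hcircinv]
      group
    exact inv_injective this
  have : a * b = a * c * (c⁻¹ * b) := by group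
  rw [this, hRD, key]
  group
end

section
/- Let A be a finite skew brace whose additive group (A,·) is nilpotent, and let A₁ be a Sylow p-subgroup of (A,·). Then A₁ is closed under ∘ and under ∘-inverses, hence is a sub-skew-brace of A. -/
namespace SkewBrace

variable {A : Type*} [Group A] (B : SkewBrace A)

theorem circ_one (a : A) : B.circ a 1 = a := by
  have h := B.compat a 1 1
  rw [one_mul] at h
  have : (1 : A) = a⁻¹ * B.circ a 1 := by
    conv_lhs at h => rw [← mul_one (B.circ a 1)]
    exact mul_left_cancel (by rw [h, mul_assoc])
  calc B.circ a 1 = a * (a⁻¹ * B.circ a 1) := by group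
    _ = a := by rw [← this, mul_one]

theorem cone_eq_one : B.cone = 1 :=
  (B.circ_one B.cone).symm.trans (B.cone_circ 1)

/-- The lambda map `λ_a : b ↦ a⁻¹ * (a ∘ b)` as a multiplicative automorphism. -/
def lam (a : A) : A ≃* A where
  toFun b := a⁻¹ * B.circ a b
  invFun c := B.circ (B.cinv a) (a * c)
  left_inv b := by
    show B.circ (B.cinv a) (a * (a⁻¹ * B.circ a b)) = b
    rw [mul_inv_cancel_left, ← B.circ_assoc, B.cinv_circ, B.cone_circ]
  right_inv c := by
    show a⁻¹ * B.circ a (B.circ (B.cinv a) (a * c)) = c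
    rw [← B.circ_assoc, B.circ_cinv, B.cone_circ, inv_mul_cancel_left]
  map_mul' b c := by
    show a⁻¹ * B.circ a (b * c) = (a⁻¹ * B.circ a b) * (a⁻¹ * B.circ a c)
    rw [B.compat]
    group

end SkewBrace

theorem skewBrace_sylow_char {A : Type*} [Group A] [Finite A]
    (hnil : Group.IsNilpotent A) (p : ℕ) (hp : p.Prime) (P : Sylow p A) :
    (P : Subgroup A).Characteristic := by
  haveI : Fact p.Prime := ⟨hp⟩
  have h4 := (isNilpotent_of_finite_tfae (G := A)).out 0 3
  have hnormal : (P : Subgroup A).Normal := h4.mp hnil p ⟨hp⟩ P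
  exact Sylow.characteristic_of_normal P hnormal

/-- In a finite skew brace with nilpotent additive group, every Sylow `p`-subgroup of
the additive group is closed under `∘` and `∘`-inverses, hence is a sub-skew-brace. -/
theorem skewBrace_sylow_subbrace {A : Type*} [Group A] [Finite A]
    (hnil : Group.IsNilpotent A) (B : SkewBrace A)
    (p : ℕ) (hp : p.Prime) (P : Sylow p A) :
    (∀ a ∈ P, ∀ b ∈ P, B.circ a b ∈ P) ∧ (∀ a ∈ P, B.cinv a ∈ P) := by
  haveI := skewBrace_sylow_char hnil p hp P
  have hlam : ∀ a : A, ∀ b ∈ P, B.lam a b ∈ P := fun a b hb => by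
    have hfix := (inferInstance : (P : Subgroup A).Characteristic).fixed (B.lam a)
    have hb' : b ∈ Subgroup.comap (B.lam a).toMonoidHom (P : Subgroup A) := by
      rw [hfix]; exact hb
    exact hb'
  have hcirc : ∀ a ∈ P, ∀ b ∈ P, B.circ a b ∈ P := fun a ha b hb => by
    have h := hlam a b hb
    have : B.circ a b = a * B.lam a b := by
      simp [SkewBrace.lam]
    rw [this]
    exact mul_mem ha h
  refine ⟨hcirc, fun a ha => ?_⟩
  -- the map b ↦ a ∘ b is injective on P, hence surjective onto P
  have hinj : Set.InjOn (B.circ a) (P : Set A) := fun b _ c _ h => by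
    have := congrArg (B.circ (B.cinv a)) h
    rwa [← B.circ_assoc, ← B.circ_assoc, B.cinv_circ, B.cone_circ, B.cone_circ] at this
  have hmaps : Set.MapsTo (B.circ a) (P : Set A) (P : Set A) := fun b hb => hcirc a ha b hb
  have hbij : Set.BijOn (B.circ a) (P : Set A) (P : Set A) :=
    (Set.Finite.injOn_iff_bijOn_of_mapsTo (Set.toFinite _) hmaps).mp hinj
  obtain ⟨b, hb, hab⟩ := hbij.surjOn (show (1 : A) ∈ (P : Set A) from one_mem _)
  have : b = B.cinv a := by
    have h2 : B.circ a (B.cinv a) = 1 := by rw [B.circ_cinv, B.cone_eq_one]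
    have := congrArg (B.circ (B.cinv a)) (hab.trans h2.symm)
    rwa [← B.circ_assoc, ← B.circ_assoc, B.cinv_circ, B.cone_circ, B.cone_circ] at this
  exact this ▸ hb
end

section
/- Let A be a group admitting an exact factorization through subgroups B and C (i.e., A = BC and B ∩ C = 1). Define a∘a' = b·a'·c for a = b·c with b ∈ B, c ∈ C. Then (A,·,∘) is a skew brace whose multiplicative group (A,∘) is isomorphic to B × C. -/
/-- Auxiliary: build a `MulEquiv` out of an `Equiv` that intertwines a raw binary
operation `m` on the source with the multiplication on the target. -/
theorem mulEquiv_of_raw {A B : Type*} (m : A → A → A) [Mul B] (e : A ≃ B)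
    (h : ∀ x y : A, e (m x y) = e x * e y) :
    Nonempty (@MulEquiv A B (Mul.mk m) _) :=
  ⟨@MulEquiv.mk A B (Mul.mk m) _ e h⟩

/-- If a group `A` admits an exact factorization through subgroups `H` and `K`, then
`(b·c) ∘ a' = b · a' · c` makes `A` a skew brace whose multiplicative group is
isomorphic to `H × K`. -/
theorem skewBrace_of_exact_factorization {A : Type*} [Group A] (H K : Subgroup A)
    (hfac : ∀ a : A, ∃ b ∈ H, ∃ c ∈ K, a = b * c)
    (hint : H ⊓ K = ⊥) :
    ∃ Br : SkewBrace A,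
      (∀ b c a' : A, b ∈ H → c ∈ K → Br.circ (b * c) a' = b * a' * c) ∧
      Nonempty (@MulEquiv A (H × K) (Mul.mk Br.circ) _) := by
  classical
  choose β hβ γ hγ hfac' using hfac
  have uniq : ∀ {x y x' y' : A}, x ∈ H → y ∈ K → x' ∈ H → y' ∈ K →
      x * y = x' * y' → x = x' ∧ y = y' := by
    intro x y x' y' hx hy hx' hy' h
    have h2 : x'⁻¹ * x = y' * y⁻¹ := by
      have h3 := congrArg (fun z => x'⁻¹ * z * y⁻¹) h
      simpa [mul_assoc] using h3
    have hm : x'⁻¹ * x ∈ H ⊓ K :=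
      ⟨H.mul_mem (H.inv_mem hx') hx, h2 ▸ K.mul_mem hy' (K.inv_mem hy)⟩
    rw [hint, Subgroup.mem_bot] at hm
    have hx2 : x = x' := by
      have h4 := congrArg (fun z => x' * z) hm
      simpa [mul_assoc, eq_comm] using h4
    refine ⟨hx2, ?_⟩
    subst hx2
    exact mul_left_cancel h
  have hchar : ∀ x y, x ∈ H → y ∈ K → β (x * y) = x ∧ γ (x * y) = y := by
    intro x y hx hy
    exact uniq (hβ (x*y)) (hγ (x*y)) hx hy (hfac' (x*y)).symm
  have hone : β (1:A) = 1 ∧ γ (1:A) = 1 := by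
    simpa using hchar 1 1 H.one_mem K.one_mem
  set circ : A → A → A := fun a a' => β a * a' * γ a with hcircdef
  have hmul : ∀ a a', β (circ a a') = β a * β a' ∧ γ (circ a a') = γ a' * γ a := by
    intro a a'
    have h : circ a a' = (β a * β a') * (γ a' * γ a) := by
      show β a * a' * γ a = _
      conv_lhs => rw [hfac' a']
      group
    rw [h]
    exact hchar _ _ (H.mul_mem (hβ a) (hβ a')) (K.mul_mem (hγ a') (hγ a))
  have hinvchar : ∀ a, β ((β a)⁻¹ * (γ a)⁻¹) = (β a)⁻¹ ∧ γ ((β a)⁻¹ * (γ a)⁻¹) = (γ a)⁻¹ :=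
    fun a => hchar _ _ (H.inv_mem (hβ a)) (K.inv_mem (hγ a))
  refine ⟨⟨circ, ?_, 1, ?_, ?_, fun a => (β a)⁻¹ * (γ a)⁻¹, ?_, ?_, ?_⟩, ?_, ?_⟩
  · intro a b c
    show β (circ a b) * c * γ (circ a b) = β a * (β b * c * γ b) * γ a
    rw [(hmul a b).1, (hmul a b).2]; group
  · intro a
    show β 1 * a * γ 1 = a
    rw [hone.1, hone.2]; group
  · intro a
    show β a * 1 * γ a = a
    rw [mul_one, ← hfac' a]
  · intro a
    show β ((β a)⁻¹ * (γ a)⁻¹) * a * γ ((β a)⁻¹ * (γ a)⁻¹) = 1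
    rw [(hinvchar a).1, (hinvchar a).2]
    have h5 := congrArg (fun z => (β a)⁻¹ * z * (γ a)⁻¹) (hfac' a)
    simpa [mul_assoc] using h5
  · intro a
    show β a * ((β a)⁻¹ * (γ a)⁻¹) * γ a = 1
    group
  · intro a b c
    show β a * (b * c) * γ a = (β a * b * γ a) * a⁻¹ * (β a * c * γ a)
    have ha : a⁻¹ = (γ a)⁻¹ * (β a)⁻¹ := by rw [← mul_inv_rev, ← hfac' a]
    rw [ha]; group
  · intro b c a' hb hc
    show β (b*c) * a' * γ (b*c) = b * a' * c
    rw [(hchar b c hb hc).1, (hchar b c hb hc).2]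
  · refine mulEquiv_of_raw _
      ⟨fun a => (⟨β a, hβ a⟩, ⟨(γ a)⁻¹, K.inv_mem (hγ a)⟩),
       fun p => (p.1 : A) * ((p.2 : A))⁻¹, ?_, ?_⟩ ?_
    · intro a
      show β a * ((γ a)⁻¹)⁻¹ = a
      rw [inv_inv, ← hfac' a]
    · intro p
      have h := hchar (p.1 : A) ((p.2 : A))⁻¹ p.1.2 (K.inv_mem p.2.2)
      refine Prod.ext (Subtype.ext ?_) (Subtype.ext ?_)
      · exact h.1
      · show (γ _)⁻¹ = (p.2 : A)
        rw [h.2, inv_inv]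
    · intro a a'
      refine Prod.ext (Subtype.ext ?_) (Subtype.ext ?_)
      · exact (hmul a a').1
      · show (γ (circ a a'))⁻¹ = (γ a)⁻¹ * (γ a')⁻¹
        rw [(hmul a a').2, mul_inv_rev]
end

section
/- Let R be a ring, S a subring and I a left ideal of R such that S ∩ I = 0, R = S + I, and both S and I are Jacobson radical rings (so (S,∘) and (I,∘) are groups under a∘b = a+b+ab). Then (R,∘) is a group and admits an exact factorization R = S∘I. -/
private def cop {R : Type*} [NonUnitalRing R] (a b : R) : R := a + b + a * b

private lemma cop_assoc {R : Type*} [NonUnitalRing R] (a b c : R) :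
    cop (cop a b) c = cop a (cop b c) := by
  simp only [cop]; noncomm_ring

private lemma cop_zero {R : Type*} [NonUnitalRing R] (a : R) : cop a 0 = a := by
  simp [cop]

private lemma zero_cop {R : Type*} [NonUnitalRing R] (a : R) : cop 0 a = a := by
  simp [cop]

/-- Let `R` be a ring, `S` a subring and `I` a left ideal with `S ∩ I = 0`,
`R = S + I`, and `S`, `I` Jacobson radical (every element has a quasi-inverse for
`a ∘ b = a + b + a·b`). Then `(R,∘)` is a group and `R = S ∘ I` is an exact
factorization: every `r` is uniquely `s ∘ i` with `s ∈ S`, `i ∈ I`. -/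
theorem circleGroup_exact_factorization {R : Type*} [NonUnitalRing R]
    (S I : NonUnitalSubring R)
    (hleft : ∀ r x : R, x ∈ I → r * x ∈ I)
    (hint : ∀ x : R, x ∈ S → x ∈ I → x = 0)
    (hsum : ∀ r : R, ∃ s ∈ S, ∃ i ∈ I, r = s + i)
    (hS : ∀ s ∈ S, ∃ s' ∈ S, s + s' + s * s' = 0 ∧ s' + s + s' * s = 0)
    (hI : ∀ i ∈ I, ∃ i' ∈ I, i + i' + i * i' = 0 ∧ i' + i + i' * i = 0) :
    (∀ r : R, ∃ r' : R, r + r' + r * r' = 0 ∧ r' + r + r' * r = 0) ∧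
    (∀ r : R, ∃! p : S × I, r = (p.1 : R) + (p.2 : R) + (p.1 : R) * (p.2 : R)) := by
    -- factorization: every r = cop s j with s ∈ S, j ∈ I
  have fact : ∀ r : R, ∃ s ∈ S, ∃ j ∈ I, r = cop s j := by
    intro r
    obtain ⟨s, hs, i, hi, rfl⟩ := hsum r
    obtain ⟨s', hs', h1, h2⟩ := hS s hs
    refine ⟨s, hs, i + s' * i, I.add_mem hi (hleft s' i hi), ?_⟩
    have key : (i + s' * i) + s * (i + s' * i) = i + (s + s' + s * s') * i := by
      noncomm_ring
    rw [h1, zero_mul, add_zero] at key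
    simp only [cop]
    rw [add_assoc, key]
  constructor
  · intro r
    obtain ⟨s, hs, j, hj, rfl⟩ := fact r
    obtain ⟨s', hs', hs1, hs2⟩ := hS s hs
    obtain ⟨j', hj', hj1, hj2⟩ := hI j hj
    refine ⟨cop j' s', ?_, ?_⟩
    · show cop (cop s j) (cop j' s') = 0
      rw [cop_assoc, ← cop_assoc j j', show cop j j' = 0 from hj1, zero_cop]
      exact hs1
    · show cop (cop j' s') (cop s j) = 0
      rw [cop_assoc, ← cop_assoc s' s, show cop s' s = 0 from hs2, zero_cop]
      exact hj2
  · intro r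
    obtain ⟨s, hs, j, hj, hr⟩ := fact r
    refine ⟨(⟨s, hs⟩, ⟨j, hj⟩), hr, ?_⟩
    rintro ⟨⟨s1, hs1⟩, ⟨i1, hi1⟩⟩ hq
    simp only at hq
    -- hq : r = cop s1 i1, hr : r = cop s j
    have hss : s1 = s := by
      have hmem : s1 - s ∈ S := S.sub_mem hs1 hs
      have hmem2 : s1 - s ∈ I := by
        have : s1 - s = (j + s * j) - (i1 + s1 * i1) := by
          have h := hq.symm.trans hr
          -- s1 + i1 + s1*i1 = s + j + s*j
          simp only [cop] at h
          rw [sub_eq_sub_iff_add_eq_add, ← add_assoc, h]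
          abel
        rw [this]
        exact I.sub_mem (I.add_mem hj (hleft s j hj)) (I.add_mem hi1 (hleft s1 i1 hi1))
      exact sub_eq_zero.mp (hint _ hmem hmem2)
    subst hss
    have hii : i1 = j := by
      obtain ⟨s', hs', h1, h2⟩ := hS s1 hs1
      have he : i1 + s1 * i1 = j + s1 * j := by
        have h := hq.symm.trans hr
        simp only [cop] at h
        rw [add_assoc, add_assoc] at h
        exact add_left_cancel h
      have c1 : (i1 + s1 * i1) + s' * (i1 + s1 * i1) = i1 + (s' + s1 + s' * s1) * i1 := by
        noncomm_ring
      have c2 : (j + s1 * j) + s' * (j + s1 * j) = j + (s' + s1 + s' * s1) * j := by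
        noncomm_ring
      rw [h2, zero_mul, add_zero] at c1 c2
      calc i1 = (i1 + s1 * i1) + s' * (i1 + s1 * i1) := c1.symm
        _ = (j + s1 * j) + s' * (j + s1 * j) := by rw [he]
        _ = j := c2
    subst hii
    rfl
end

section
/- Let N be a near-ring with identity and M a construction subgroup of N. Then M is a skew brace under m·m' = m+m' and m∘m' = m + (1+m)·m'. -/
/-- A construction subgroup `M` of a near-ring `N` is a skew brace with
`m · m' = m + m'` and `m ∘ m' = m + (1+m)·m'`. -/
theorem nearRing_construction_subgroup_skewBrace {N : Type*} [AddGroup N] [Monoid N]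
    (hd : ∀ x y z : N, x * (y + z) = x * y + x * z)
    (M : AddSubgroup N)
    (h1 : ∀ m ∈ M, IsUnit ((1 : N) + m))
    (h2 : ∀ m ∈ M, ∀ m' ∈ M, -1 + ((1 : N) + m) * (1 + m') ∈ M)
    (h3 : ∀ m ∈ M, ∃ m' ∈ M, ((1 : N) + m) * (1 + m') = 1 ∧ ((1 : N) + m') * (1 + m) = 1) :
    ∃ B : SkewBrace (Multiplicative M), ∀ m m' : M,
      ((Multiplicative.toAdd
        (B.circ (Multiplicative.ofAdd m) (Multiplicative.ofAdd m')) : M) : N)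
        = (m : N) + ((1 : N) + (m : N)) * (m' : N) := by
  classical
  have hz : ∀ x : N, x * 0 = 0 := by
    intro x
    have h : x * 0 + 0 = x * 0 + x * 0 := by
      rw [add_zero, ← hd, add_zero]
    exact (add_left_cancel h).symm
  have key : ∀ a b : N, (1 : N) + (a + (1 + a) * b) = (1 + a) * (1 + b) := by
    intro a b
    rw [hd, mul_one, add_assoc]
  have hmem : ∀ (m m' : M), (m : N) + ((1 : N) + m) * m' ∈ M := by
    intro m m'
    have h := h2 m m.2 m' m'.2
    rw [← key, neg_add_cancel_left] at h
    exact h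
  let g : M → M → M := fun m m' => ⟨(m : N) + ((1 : N) + m) * m', hmem m m'⟩
  refine ⟨{
    circ := fun a b => Multiplicative.ofAdd (g (Multiplicative.toAdd a) (Multiplicative.toAdd b))
    circ_assoc := ?_
    cone := Multiplicative.ofAdd 0
    cone_circ := ?_
    circ_cone := ?_
    cinv := fun a => Multiplicative.ofAdd
      ⟨(h3 ((Multiplicative.toAdd a : M) : N) (Multiplicative.toAdd a).2).choose,
        (h3 ((Multiplicative.toAdd a : M) : N) (Multiplicative.toAdd a).2).choose_spec.1⟩
    cinv_circ := ?_
    circ_cinv := ?_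
    compat := ?_ }, ?_⟩
  · intro a b c
    apply congrArg Multiplicative.ofAdd
    apply Subtype.ext
    set x : M := Multiplicative.toAdd a
    set y : M := Multiplicative.toAdd b
    set z : M := Multiplicative.toAdd c
    show ((x : N) + (1 + x) * y) + (1 + ((x : N) + (1 + x) * y)) * z
      = (x : N) + (1 + x) * ((y : N) + (1 + y) * z)
    rw [key, hd ((1 : N) + (x : N)) (y : N) (((1 : N) + (y : N)) * (z : N)), ← mul_assoc, add_assoc]
  · intro a
    apply congrArg Multiplicative.ofAdd
    apply Subtype.ext
    show (0 : N) + ((1 : N) + 0) * (Multiplicative.toAdd a : M) = (Multiplicative.toAdd a : M)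
    rw [zero_add, add_zero, one_mul]
  · intro a
    apply congrArg Multiplicative.ofAdd
    apply Subtype.ext
    show ((Multiplicative.toAdd a : M) : N) + ((1 : N) + (Multiplicative.toAdd a : M)) * 0
      = (Multiplicative.toAdd a : M)
    rw [hz, add_zero]
  · intro a
    apply congrArg Multiplicative.ofAdd
    apply Subtype.ext
    set x : M := Multiplicative.toAdd a
    have hs := (h3 (x : N) x.2).choose_spec.2.2
    set y : N := (h3 (x : N) x.2).choose
    have h : (1 : N) + (y + (1 + y) * x) = 1 + 0 := by
      rw [add_zero, key, hs]
    exact add_left_cancel h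
  · intro a
    apply congrArg Multiplicative.ofAdd
    apply Subtype.ext
    set x : M := Multiplicative.toAdd a
    have hs := (h3 (x : N) x.2).choose_spec.2.1
    set y : N := (h3 (x : N) x.2).choose
    have h : (1 : N) + ((x : N) + (1 + x) * y) = 1 + 0 := by
      rw [add_zero, key, hs]
    exact add_left_cancel h
  · intro a b c
    apply congrArg Multiplicative.ofAdd
    apply Subtype.ext
    set x : M := Multiplicative.toAdd a
    set y : M := Multiplicative.toAdd b
    set z : M := Multiplicative.toAdd c
    show (x : N) + (1 + x) * ((y : N) + z)
      = ((x : N) + (1 + x) * y) + -(x : N) + ((x : N) + (1 + x) * z)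
    rw [hd, add_assoc ((x : N) + (1 + x) * y), neg_add_cancel_left, add_assoc]
  · intro m m'
    rfl
end

section
/- Let A and B be skew braces and α : (A,∘) → Aut_Br(B) a homomorphism into the group of skew brace automorphisms of B. Then A × B with (a,b)(a',b') = (a·a', b·b') and (a,b)∘(a',b') = (a∘a', b∘α_a(b')) is a skew brace. -/
/-- Semidirect product of skew braces: if `(A,∘)` acts on the skew brace `B` by
brace automorphisms `α`, then `A × B` with componentwise `·` and
`(a,b) ∘ (a',b') = (a ∘ a', b ∘ α_a(b'))` is a skew brace. -/
theorem skewBrace_semidirect {A B : Type*} [Group A] [Group B]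
    (SA : SkewBrace A) (SB : SkewBrace B) (α : A → B ≃ B)
    (hmul : ∀ a : A, ∀ b b' : B, α a (b * b') = α a b * α a b')
    (hcirc : ∀ a : A, ∀ b b' : B, α a (SB.circ b b') = SB.circ (α a b) (α a b'))
    (hhom : ∀ a a' : A, ∀ b : B, α (SA.circ a a') b = α a (α a' b)) :
    ∃ C : SkewBrace (A × B), ∀ p q : A × B,
      C.circ p q = (SA.circ p.1 q.1, SB.circ p.2 (α p.1 q.2)) := by
  -- α a preserves the circ identity of B
  have hcone : ∀ a : A, α a SB.cone = SB.cone := by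
    intro a
    have h : α a SB.cone = SB.circ (α a SB.cone) (α a SB.cone) := by
      conv_lhs => rw [← SB.cone_circ SB.cone, hcirc]
    have := congrArg (SB.circ (SB.cinv (α a SB.cone))) h
    rw [← SB.circ_assoc, SB.cinv_circ, SB.cone_circ] at this
    exact this.symm
  -- α SA.cone = id
  have hid : ∀ b : B, α SA.cone b = b := by
    intro b
    have h : α SA.cone (α SA.cone b) = α SA.cone b := by
      rw [← hhom, SA.cone_circ]
    exact (α SA.cone).injective h
  refine ⟨{
    circ := fun p q => (SA.circ p.1 q.1, SB.circ p.2 (α p.1 q.2))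
    circ_assoc := by
      intro p q r
      refine Prod.ext (SA.circ_assoc _ _ _) ?_
      simp only
      rw [hcirc, ← hhom, SB.circ_assoc]
    cone := (SA.cone, SB.cone)
    cone_circ := by
      intro p
      refine Prod.ext (SA.cone_circ _) ?_
      simp only [hid, SB.cone_circ]
    circ_cone := by
      intro p
      refine Prod.ext (SA.circ_cone _) ?_
      simp only [hcone, SB.circ_cone]
    cinv := fun p => (SA.cinv p.1, α (SA.cinv p.1) (SB.cinv p.2))
    cinv_circ := by
      intro p
      refine Prod.ext (SA.cinv_circ _) ?_
      simp only
      rw [← hcirc, SB.cinv_circ, hcone]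
    circ_cinv := by
      intro p
      refine Prod.ext (SA.circ_cinv _) ?_
      simp only
      rw [← hhom, SA.circ_cinv, hid, SB.circ_cinv]
    compat := by
      intro p q r
      refine Prod.ext (SA.compat _ _ _) ?_
      simp only [Prod.fst_mul, Prod.snd_mul, Prod.snd_inv]
      rw [hmul, SB.compat]
  }, fun p q => rfl⟩
end

section
/- Let A be a skew brace. Then r : A × A → A × A, r(a,b) = (λ_a(b), λ_{λ_a(b)}⁻¹((a∘b)⁻¹·a·(a∘b))), is a bijective solution of the Yang–Baxter equation: (r×id)(id×r)(r×id) = (id×r)(r×id)(id×r). Moreover r is involutive (r² = id) if and only if a·b = b·a for all a,b ∈ A. -/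
namespace SkewBraceYB

variable {A : Type*} [Group A] (B : SkewBrace A)

theorem cone_eq_one : B.cone = 1 := by
  have h := B.compat B.cone 1 1
  rw [B.cone_circ, B.cone_circ] at h
  have h1 : B.cone⁻¹ = 1 := by simpa using h.symm
  simpa using congrArg Inv.inv h1

theorem circ_one (a : A) : B.circ a 1 = a := by
  rw [← cone_eq_one B, B.circ_cone]

theorem cinv_cancel (a x : A) : B.circ (B.cinv a) (B.circ a x) = x := by
  rw [← B.circ_assoc, B.cinv_circ, B.cone_circ]

theorem cancel' (a x : A) : B.circ a (B.circ (B.cinv a) x) = x := by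
  rw [← B.circ_assoc, B.circ_cinv, B.cone_circ]

theorem circ_inj (a : A) : Function.Injective (B.circ a) := by
  intro x y h
  have h2 := congrArg (B.circ (B.cinv a)) h
  rwa [cinv_cancel, cinv_cancel] at h2

theorem circ_inv (a b : A) : B.circ a b⁻¹ = a * (B.circ a b)⁻¹ * a := by
  have h := B.compat a b b⁻¹
  rw [mul_inv_cancel, circ_one] at h
  have h2 := congrArg (fun x => (B.circ a b * a⁻¹)⁻¹ * x) h
  rw [← mul_assoc, inv_mul_cancel, one_mul] at h2
  rw [← h2]; group

/-- `a ∘ λ_b(c) = a · (a∘b)⁻¹ · (a∘(b∘c))`. -/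
theorem circ_lam (a b c : A) :
    B.circ a (b⁻¹ * B.circ b c) =
      a * (B.circ a b)⁻¹ * B.circ a (B.circ b c) := by
  rw [B.compat, circ_inv]
  group

/-- The solution map, in closed form. -/
def rfun : A × A → A × A := fun p =>
  (p.1⁻¹ * B.circ p.1 p.2,
   B.circ (B.cinv (p.1⁻¹ * B.circ p.1 p.2)) (B.circ p.1 p.2))

theorem circ_rfun (a b : A) :
    B.circ (rfun B (a, b)).1 (rfun B (a, b)).2 = B.circ a b :=
  cancel' B _ _

/-- Explicit inverse of `rfun`. -/
def gfun : A × A → A × A := fun p =>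
  (B.circ p.1 p.2 * p.1⁻¹,
   B.circ (B.cinv (B.circ p.1 p.2 * p.1⁻¹)) (B.circ p.1 p.2))

theorem gfun_rfun : Function.LeftInverse (gfun B) (rfun B) := by
  rintro ⟨a, b⟩
  have h1 : B.circ (rfun B (a, b)).1 (rfun B (a, b)).2 = B.circ a b := circ_rfun B a b
  show gfun B ((rfun B (a,b)).1, (rfun B (a,b)).2) = (a, b)
  simp only [gfun, h1]
  have h2 : B.circ a b * ((rfun B (a,b)).1)⁻¹ = a := by
    simp only [rfun]; group
  rw [h2, cinv_cancel]

theorem rfun_gfun : Function.RightInverse (gfun B) (rfun B) := by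
  rintro ⟨u, v⟩
  show rfun B ((gfun B (u,v)).1, (gfun B (u,v)).2) = (u, v)
  have h1 : B.circ (gfun B (u,v)).1 (gfun B (u,v)).2 = B.circ u v := by
    simp only [gfun]; exact cancel' B _ _
  simp only [rfun, h1]
  have h2 : ((gfun B (u,v)).1)⁻¹ * B.circ u v = u := by
    simp only [gfun]; group
  rw [h2, cinv_cancel]

theorem rfun_bij : Function.Bijective (rfun B) :=
  Function.bijective_iff_has_inverse.2 ⟨gfun B, gfun_rfun B, rfun_gfun B⟩

/-- The conjugating map for the YBE computation. -/
def J : A × A × A → A × A × A := fun p =>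
  (p.1, B.circ p.1 p.2.1, B.circ p.1 (B.circ p.2.1 p.2.2))

theorem J_inj : Function.Injective (J B) := by
  rintro ⟨a, b, c⟩ ⟨a', b', c'⟩ h
  simp only [J, Prod.mk.injEq] at h
  obtain ⟨h1, h2, h3⟩ := h
  subst h1
  have hb : b = b' := circ_inj B a h2
  subst hb
  have hc : c = c' := circ_inj B b (circ_inj B a h3)
  exact Prod.ext rfl (Prod.ext rfl hc)

/-- First "guitar" map. -/
def R1 : A × A × A → A × A × A := fun p => (p.1⁻¹ * p.2.1, p.2.1, p.2.2)

/-- Second "guitar" map. -/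
def R2 : A × A × A → A × A × A := fun p => (p.1, p.1 * p.2.1⁻¹ * p.2.2, p.2.2)

theorem R_braid (p : A × A × A) : R1 (R2 (R1 p)) = R2 (R1 (R2 p)) := by
  obtain ⟨a, s, t⟩ := p
  simp only [R1, R2, Prod.mk.injEq]
  exact ⟨by group, by group, trivial⟩

/-- `J` intertwines `r × id` with `R1`. -/
theorem J_E1 (a b c : A) :
    J B ((rfun B (a, b)).1, (rfun B (a, b)).2, c) = R1 (J B (a, b, c)) := by
  simp only [J, R1, rfun, Prod.mk.injEq]
  refine ⟨trivial, cancel' B _ _, ?_⟩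
  rw [← B.circ_assoc, cancel' B, B.circ_assoc]

/-- `J` intertwines `id × r` with `R2`. -/
theorem J_E2 (a b c : A) :
    J B (a, rfun B (b, c)) = R2 (J B (a, b, c)) := by
  simp only [J, R2, rfun, Prod.mk.injEq]
  refine ⟨trivial, ?_, ?_⟩
  · exact circ_lam B a b c
  · rw [cancel' B]

theorem rfun_rfun (a b : A) :
    rfun B (rfun B (a, b)) =
      ((B.circ a b)⁻¹ * a * B.circ a b,
        B.circ (B.cinv ((B.circ a b)⁻¹ * a * B.circ a b)) (B.circ a b)) := by
  have h1 := circ_rfun B a b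
  have h2 : ((rfun B (a,b)).1)⁻¹ * B.circ a b = (B.circ a b)⁻¹ * a * B.circ a b := by
    simp only [rfun]; group
  show rfun B ((rfun B (a,b)).1, (rfun B (a,b)).2) = _
  simp only [rfun] at h1 h2 ⊢
  rw [h1, h2]

end SkewBraceYB

open SkewBraceYB

/-- The canonical map `r(a,b) = (λ_a(b), λ_{λ_a(b)}⁻¹((a∘b)⁻¹·a·(a∘b)))` of a skew
brace is a bijective solution of the Yang–Baxter equation, and it is involutive
iff the additive group is abelian. -/
theorem skewBrace_yangBaxter {A : Type*} [Group A] (B : SkewBrace A) :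
    ∀ r : A × A → A × A,
      (∀ a b : A, r (a, b) = (a⁻¹ * B.circ a b,
        Function.invFun
          (fun x => (a⁻¹ * B.circ a b)⁻¹ * B.circ (a⁻¹ * B.circ a b) x)
          ((B.circ a b)⁻¹ * a * B.circ a b))) →
      ∀ r1 r2 : A × A × A → A × A × A,
        (∀ p, r1 p = ((r (p.1, p.2.1)).1, (r (p.1, p.2.1)).2, p.2.2)) →
        (∀ p, r2 p = (p.1, r p.2)) →
        Function.Bijective r ∧
        (r1 ∘ r2 ∘ r1 = r2 ∘ r1 ∘ r2) ∧
        ((r ∘ r = id) ↔ ∀ a b : A, a * b = b * a) := by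
  intro r hr r1 r2 hr1 hr2
  haveI : Nonempty A := ⟨B.cone⟩
  -- `r` coincides with the closed-form map `rfun B`.
  have hre : r = rfun B := by
    funext p
    obtain ⟨a, b⟩ := p
    rw [hr a b]
    have hinj : Function.Injective
        (fun x => (a⁻¹ * B.circ a b)⁻¹ * B.circ (a⁻¹ * B.circ a b) x) := by
      intro x y h
      exact circ_inj B _ (mul_left_cancel h)
    have hval : (fun x => (a⁻¹ * B.circ a b)⁻¹ * B.circ (a⁻¹ * B.circ a b) x)
        (B.circ (B.cinv (a⁻¹ * B.circ a b)) (B.circ a b))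
        = (B.circ a b)⁻¹ * a * B.circ a b := by
      simp only [cancel' B]
      group
    rw [← hval, Function.leftInverse_invFun hinj]
    rfl
  subst hre
  refine ⟨rfun_bij B, ?_, ?_⟩
  · -- Yang–Baxter equation, via conjugation by `J B`.
    funext p
    obtain ⟨a, b, c⟩ := p
    apply J_inj B
    have e1 : ∀ q : A × A × A, J B (r1 q) = R1 (J B q) := by
      rintro ⟨x, y, z⟩
      rw [hr1 ⟨x, y, z⟩]
      exact J_E1 B x y z
    have e2 : ∀ q : A × A × A, J B (r2 q) = R2 (J B q) := by
      rintro ⟨x, y, z⟩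
      rw [hr2 ⟨x, y, z⟩]
      exact J_E2 B x y z
    show J B (r1 (r2 (r1 (a, b, c)))) = J B (r2 (r1 (r2 (a, b, c))))
    rw [e1, e2, e1, e2, e1, e2]
    exact R_braid (J B (a, b, c))
  · constructor
    · intro h a c
      set b := B.circ (B.cinv a) c with hb
      have hs : B.circ a b = c := cancel' B a c
      have h2 := congrFun h (a, b)
      simp only [Function.comp_apply, id_eq] at h2
      rw [rfun_rfun B a b, hs] at h2
      have h3 : c⁻¹ * a * c = a := congrArg Prod.fst h2
      calc a * c = c * (c⁻¹ * a * c) := by group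
        _ = c * a := by rw [h3]
    · intro hcomm
      funext p
      obtain ⟨a, b⟩ := p
      simp only [Function.comp_apply, id_eq]
      rw [rfun_rfun B a b]
      have h1 : (B.circ a b)⁻¹ * a * B.circ a b = a := by
        rw [mul_assoc, hcomm a (B.circ a b), ← mul_assoc, inv_mul_cancel, one_mul]
      rw [h1, cinv_cancel]
end

section
/- Let A be a skew brace and r its canonical Yang–Baxter solution r(a,b) = (λ_a(b), μ_b(a)) with μ_b(a) = (λ_a(b))⁻̄ ∘ a ∘ b. Then for all n ≥ 0: r^{2n}(a,b) = ((a∘b)^{-n}·a·(a∘b)^n, (overline of that element) ∘ a ∘ b), where powers (a∘b)^n are taken in (A,·). Consequently r^{2n} = id if and only if a·bⁿ = bⁿ·a for all a,b ∈ A. -/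
/-- For the canonical solution `r(a,b) = (λ_a(b), μ_b(a))` of a skew brace, for all
`n ≥ 0`, `r^{2n}(a,b) = (c, c̄ ∘ a ∘ b)` with `c = (a∘b)^{-n}·a·(a∘b)^n` (powers in
`(A,·)`), and consequently `r^{2n} = id` iff `a·bⁿ = bⁿ·a` for all `a, b`. -/
theorem skewBrace_r_even_powers {A : Type*} [Group A] (B : SkewBrace A) :
    ∀ r : A × A → A × A,
      (∀ a b : A, r (a, b) = (a⁻¹ * B.circ a b,
        B.circ (B.cinv (a⁻¹ * B.circ a b)) (B.circ a b))) →
      (∀ n : ℕ, ∀ a b : A,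
        r^[2 * n] (a, b) =
          (((B.circ a b) ^ n)⁻¹ * a * (B.circ a b) ^ n,
            B.circ (B.cinv (((B.circ a b) ^ n)⁻¹ * a * (B.circ a b) ^ n))
              (B.circ a b))) ∧
      (∀ n : ℕ, (r^[2 * n] = id ↔ ∀ a b : A, a * b ^ n = b ^ n * a)) := by
  intro r hr
  -- circ x (circ (cinv x) s) = s
  have hcanc : ∀ x s : A, B.circ x (B.circ (B.cinv x) s) = s := by
    intro x s
    rw [← B.circ_assoc, B.circ_cinv, B.cone_circ]
  -- r on pairs of the form (x, x̄ ∘ s)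
  have hstep : ∀ x s : A,
      r (x, B.circ (B.cinv x) s) = (x⁻¹ * s, B.circ (B.cinv (x⁻¹ * s)) s) := by
    intro x s
    rw [hr, hcanc]
  -- main claim by induction
  have hmain : ∀ n : ℕ, ∀ x s : A,
      r^[2 * n] (x, B.circ (B.cinv x) s) =
        ((s ^ n)⁻¹ * x * s ^ n,
          B.circ (B.cinv ((s ^ n)⁻¹ * x * s ^ n)) s) := by
    intro n
    induction n with
    | zero => intro x s; simp
    | succ n ih =>
      intro x s
      have h2 : 2 * (n + 1) = (2 * n) + 1 + 1 := by ring
      rw [h2, Function.iterate_succ_apply, Function.iterate_succ_apply,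
        hstep, hstep]
      have hx : (x⁻¹ * s)⁻¹ * s = s⁻¹ * x * s := by group
      rw [hx, ih]
      have key : (s ^ n)⁻¹ * (s⁻¹ * x * s) * s ^ n
          = (s ^ (n + 1))⁻¹ * x * s ^ (n + 1) := by group
      rw [key]
  have hb : ∀ a b : A, B.circ (B.cinv a) (B.circ a b) = b := by
    intro a b
    rw [← B.circ_assoc, B.cinv_circ, B.cone_circ]
  have h1 : ∀ n : ℕ, ∀ a b : A,
      r^[2 * n] (a, b) =
        (((B.circ a b) ^ n)⁻¹ * a * (B.circ a b) ^ n,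
          B.circ (B.cinv (((B.circ a b) ^ n)⁻¹ * a * (B.circ a b) ^ n))
            (B.circ a b)) := by
    intro n a b
    conv_lhs => rw [← hb a b]
    exact hmain n a (B.circ a b)
  refine ⟨h1, fun n => ⟨fun hid a b => ?_, fun hcomm => ?_⟩⟩
  · have := h1 n a (B.circ (B.cinv a) b)
    rw [hcanc, hid] at this
    have h2 : (b ^ n)⁻¹ * a * b ^ n = a := (Prod.mk.injEq _ _ _ _ ▸ this.symm).1
    calc a * b ^ n = b ^ n * ((b ^ n)⁻¹ * a * b ^ n) := by group
    _ = b ^ n * a := by rw [h2]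
  · funext p
    obtain ⟨a, b⟩ := p
    rw [h1 n a b]
    have hc : ((B.circ a b) ^ n)⁻¹ * a * (B.circ a b) ^ n = a := by
      rw [mul_assoc, hcomm a (B.circ a b)]; group
    rw [hc, hb]
    rfl
end

section
/- Let A be a finite skew brace with more than one element, and let r be its canonical Yang–Baxter solution. Then the order of r as a permutation of A × A equals 2d, where d is the exponent of the quotient group (A,·)/Z(A,·) of the additive group by its center. In particular, the order of r is even. -/
/-- Auxiliary sequence: `SBg s 0 a = a`, `SBg s (n+1) a = (SBg s n a)⁻¹ * s`. -/
private def SBg {A : Type*} [Group A] (s : A) : ℕ → A → A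
  | 0, a => a
  | n+1, a => (SBg s n a)⁻¹ * s

private theorem SBg_even {A : Type*} [Group A] (s a : A) (k : ℕ) :
    SBg s (2 * k) a = (s ^ k)⁻¹ * a * s ^ k := by
  induction k with
  | zero => simp [SBg]
  | succ k ih =>
      have h : 2 * (k + 1) = (2 * k) + 1 + 1 := by ring
      rw [h]
      show ((SBg s (2 * k) a)⁻¹ * s)⁻¹ * s = _
      rw [ih, pow_succ]
      group

/-- The order of the canonical Yang–Baxter solution of a finite skew brace with more
than one element equals `2d`, where `d` is the exponent of the additive group modulo
its center. -/
theorem skewBrace_r_order {A : Type*} [Group A] [Finite A] [Nontrivial A]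
    (B : SkewBrace A) (r : Function.End (A × A))
    (hr : ∀ a b : A, r (a, b) = (a⁻¹ * B.circ a b,
      B.circ (B.cinv (a⁻¹ * B.circ a b)) (B.circ a b))) :
    orderOf r = 2 * Monoid.exponent (A ⧸ Subgroup.center A) := by
  -- basic skew brace facts
  have circ_one : ∀ a : A, B.circ a 1 = a := by
    intro a
    have h := B.compat a 1 1
    rw [one_mul, mul_assoc] at h
    exact (inv_mul_eq_one.mp (left_eq_mul.mp h)).symm
  have cone_one : B.cone = 1 := by
    have h1 := circ_one B.cone
    rw [B.cone_circ] at h1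
    exact h1.symm
  have cinv_circ_circ : ∀ a b : A, B.circ (B.cinv a) (B.circ a b) = b := by
    intro a b
    rw [← B.circ_assoc, B.cinv_circ, B.cone_circ]
  have circ_cinv_circ : ∀ a s : A, B.circ a (B.circ (B.cinv a) s) = s := by
    intro a s
    rw [← B.circ_assoc, B.circ_cinv, B.cone_circ]
  -- one step of r on a fiber
  have step : ∀ x s : A, r (x, B.circ (B.cinv x) s)
      = (x⁻¹ * s, B.circ (B.cinv (x⁻¹ * s)) s) := by
    intro x s
    rw [hr, circ_cinv_circ]
  -- iterates of r
  have iter : ∀ (n : ℕ) (a b : A), (r ^ n) (a, b)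
      = (SBg (B.circ a b) n a,
         B.circ (B.cinv (SBg (B.circ a b) n a)) (B.circ a b)) := by
    intro n a b
    induction n with
    | zero =>
        show (a, b) = _
        rw [show SBg (B.circ a b) 0 a = a from rfl, cinv_circ_circ]
    | succ n ih =>
        rw [pow_succ']
        show r ((r ^ n) (a, b)) = _
        rw [ih, step]
        rfl
  -- characterization of even powers being trivial
  have even_iff : ∀ k : ℕ, r ^ (2 * k) = 1 ↔
      ∀ s : A, s ^ k ∈ Subgroup.center A := by
    intro k
    constructor
    · intro h s
      rw [Subgroup.mem_center_iff]
      intro a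
      have h1 := congrFun h (a, B.circ (B.cinv a) s)
      rw [iter, circ_cinv_circ, SBg_even] at h1
      have h2 : (s ^ k)⁻¹ * a * s ^ k = a := congrArg Prod.fst h1
      have h3 : s ^ k * ((s ^ k)⁻¹ * a * s ^ k) = s ^ k * a := by rw [h2]
      rw [← mul_assoc, ← mul_assoc, mul_inv_cancel, one_mul] at h3
      exact h3
    · intro h
      funext p
      obtain ⟨a, b⟩ := p
      rw [iter, SBg_even]
      have h1 : (B.circ a b ^ k)⁻¹ * a * B.circ a b ^ k = a := by
        rw [mul_assoc, Subgroup.mem_center_iff.mp (h (B.circ a b)) a,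
          inv_mul_cancel_left]
      rw [h1, cinv_circ_circ]
      rfl
  set Z := Subgroup.center A
  set d := Monoid.exponent (A ⧸ Z) with hd
  have hd0 : 0 < d := Monoid.ExponentExists.of_finite.exponent_pos
  have h2d : r ^ (2 * d) = 1 := by
    rw [even_iff]
    intro s
    rw [← QuotientGroup.eq_one_iff (s ^ d), QuotientGroup.mk_pow]
    exact Monoid.pow_exponent_eq_one _
  have hdvd : orderOf r ∣ 2 * d := orderOf_dvd_of_pow_eq_one h2d
  rcases Nat.even_or_odd (orderOf r) with he | ho
  · obtain ⟨e, he⟩ := he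
    have hre : r ^ (2 * e) = 1 := by
      rw [two_mul, ← he]
      exact pow_orderOf_eq_one r
    have hde : d ∣ e := by
      apply Monoid.exponent_dvd_of_forall_pow_eq_one
      intro x
      obtain ⟨s, rfl⟩ := QuotientGroup.mk_surjective x
      rw [← QuotientGroup.mk_pow, QuotientGroup.eq_one_iff]
      exact (even_iff e).mp hre s
    have hed : e ∣ d := by
      have : 2 * e ∣ 2 * d := by rw [two_mul, ← he]; exact hdvd
      exact (mul_dvd_mul_iff_left (two_ne_zero)).mp this
    rw [he, ← two_mul, Nat.dvd_antisymm hed hde]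
  · -- odd order is impossible
    exfalso
    obtain ⟨k, hk⟩ := ho
    have hro : r ^ (2 * k + 1) = 1 := by rw [← hk]; exact pow_orderOf_eq_one r
    -- evaluate on the fiber over 1 : every element equals its inverse
    have hinv : ∀ a : A, a⁻¹ = a := by
      intro a
      have hcs : B.circ a (B.cinv a) = 1 := by rw [B.circ_cinv, cone_one]
      have h1 := congrFun hro (a, B.cinv a)
      rw [iter] at h1
      have h2 := congrArg Prod.fst h1
      simp only [hcs] at h2
      have h3 : SBg (1 : A) (2 * k + 1) a = a⁻¹ := by
        show (SBg (1 : A) (2 * k) a)⁻¹ * 1 = a⁻¹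
        rw [SBg_even]
        simp
      rw [h3] at h2
      exact h2
    -- hence the additive group is abelian
    have hcomm : ∀ x y : A, x * y = y * x := by
      intro x y
      calc x * y = (x * y)⁻¹ := (hinv _).symm
        _ = y⁻¹ * x⁻¹ := mul_inv_rev x y
        _ = y * x := by rw [hinv, hinv]
    -- so r ^ 2 = 1, hence r = 1
    have hr2 : r ^ (2 * 1) = 1 := by
      rw [even_iff]
      intro s
      rw [Subgroup.mem_center_iff]
      intro g
      rw [pow_one]
      exact hcomm g s
    have hr2' : r ^ 2 = 1 := by simpa using hr2
    have hr1 : r = 1 := by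
      calc r = (r ^ 2) ^ k * r := by rw [hr2', one_pow, one_mul]
        _ = r ^ (2 * k + 1) := by rw [← pow_mul, ← pow_succ]
        _ = 1 := hro
    obtain ⟨b, hb⟩ := exists_ne (1 : A)
    have hb1 : B.circ 1 b = b := by rw [← cone_one, B.cone_circ]
    have h1 : r (1, b) = ((1 : A), b) := by rw [hr1]; rfl
    rw [hr 1 b, hb1] at h1
    have := congrArg Prod.fst h1
    simp at this
    exact hb this
end

section
/- Let A be a skew brace. Then the additive group (A,·) with the binary operation a•b = λ_a⁻¹(b) is a skew cycle set: each map b ↦ a•b is bijective, a•(b·c) = (a•b)·(a•c), and (a·b)•c = (a•b)•(a•c) for all a,b,c ∈ A. Conversely, if (A,·,•) is a skew cycle set then A with a∘b = a·(a*b), where * is the inverse operation of •, is a skew brace. -/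
/-- A skew cycle set: a group `(A,·)` with a binary operation `•` such that each left
translation is bijective, `a•(bc) = (a•b)(a•c)` and `(ab)•c = (a•b)•(a•c)`. -/
structure SkewCycleSet (A : Type*) [Group A] where
  dot : A → A → A
  bij : ∀ a : A, Function.Bijective (dot a)
  dist : ∀ a b c : A, dot a (b * c) = dot a b * dot a c
  cond : ∀ a b c : A, dot (a * b) c = dot (dot a b) (dot a c)

namespace SkewBraceAux

variable {A : Type*} [Group A] (B : SkewBrace A)

/-- `λ_a(b) = a⁻¹ (a ∘ b)`. -/
def lam (a b : A) : A := a⁻¹ * B.circ a b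

lemma circ_one (a : A) : B.circ a 1 = a := by
  have h := B.compat a 1 1
  rw [one_mul] at h
  have h1 : B.circ a 1 * 1 = B.circ a 1 * (a⁻¹ * B.circ a 1) := by
    rw [mul_one, ← mul_assoc]; exact h
  have h2 := mul_left_cancel h1
  exact (inv_mul_eq_one.mp h2.symm).symm

lemma cone_eq_one : B.cone = 1 := by
  have h1 := circ_one B B.cone
  have h2 := B.cone_circ 1
  rw [h2] at h1; exact h1.symm

lemma circ_inv (a b : A) : B.circ a b⁻¹ = a * (B.circ a b)⁻¹ * a := by
  have h := B.compat a b b⁻¹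
  rw [mul_inv_cancel, circ_one] at h
  have : B.circ a b⁻¹ = (B.circ a b * a⁻¹)⁻¹ * a :=
    eq_inv_mul_iff_mul_eq.mpr h.symm
  rw [this, mul_inv_rev, inv_inv]

lemma lam_comp (a b c : A) : lam B a (lam B b c) = lam B (B.circ a b) c := by
  unfold lam
  rw [B.compat, circ_inv, ← B.circ_assoc]
  group

lemma lam_cone (c : A) : lam B B.cone c = c := by
  unfold lam
  rw [B.cone_circ, cone_eq_one, inv_one, one_mul]

lemma lam_cancel (a c : A) : lam B a (lam B (B.cinv a) c) = c := by
  rw [lam_comp, B.circ_cinv, lam_cone]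

lemma lam_cancel' (a c : A) : lam B (B.cinv a) (lam B a c) = c := by
  rw [lam_comp, B.cinv_circ, lam_cone]

lemma circ_lam (a x : A) : B.circ a x = a * lam B a x := by
  unfold lam; rw [mul_inv_cancel_left]

lemma key (a b : A) : B.circ a (lam B (B.cinv a) b) = a * b := by
  rw [circ_lam, lam_cancel]

lemma inv_unique (y z : A) (h : B.circ y z = B.cone) : y = B.cinv z := by
  have h2 : B.circ (B.circ y z) (B.cinv z) = B.cinv z := by
    rw [h, B.cone_circ]
  rw [B.circ_assoc, B.circ_cinv, B.circ_cone] at h2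
  exact h2

lemma cinv_circ_mul (a x : A) :
    B.cinv (B.circ a x) = B.circ (B.cinv x) (B.cinv a) := by
  refine (inv_unique B _ _ ?_).symm
  rw [B.circ_assoc, ← B.circ_assoc (B.cinv a) a x, B.cinv_circ, B.cone_circ,
    B.cinv_circ]

lemma dot_eq_lam (a b : A) :
    B.circ (B.cinv a) (a * b) = lam B (B.cinv a) b := by
  rw [B.compat, B.cinv_circ, cone_eq_one, one_mul]
  rfl

lemma lam_mul (a b c : A) : lam B a (b * c) = lam B a b * lam B a c := by
  unfold lam
  rw [B.compat]
  group

end SkewBraceAux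

namespace SkewCycleSetAux

variable {A : Type*} [Group A] (S : SkewCycleSet A)

/-- The inverse of left translation. -/
noncomputable def tau (a : A) : A → A := Function.invFun (S.dot a)

lemma li (a : A) : Function.LeftInverse (tau S a) (S.dot a) :=
  Function.leftInverse_invFun (S.bij a).1

lemma ri (a : A) : Function.RightInverse (tau S a) (S.dot a) :=
  Function.rightInverse_invFun (S.bij a).2

lemma dot_one (a : A) : S.dot a 1 = 1 := by
  have h := S.dist a 1 1
  rw [one_mul] at h
  exact (left_eq_mul.mp h)

lemma dot_one_left (c : A) : S.dot 1 c = c := by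
  have h := S.cond 1 1 c
  rw [one_mul, dot_one] at h
  exact ((S.bij 1).1 h).symm

lemma tau_one_left (c : A) : tau S 1 c = c := by
  have h := li S 1 c
  rw [dot_one_left] at h
  exact h

lemma tau_one (a : A) : tau S a 1 = 1 := by
  have h := li S a 1
  rw [dot_one] at h
  exact h

lemma tau_mul (a b c : A) : tau S a (b * c) = tau S a b * tau S a c := by
  apply (S.bij a).1
  rw [ri S a, S.dist, ri S a, ri S a]

lemma dot_comp (a b c : A) : S.dot (a * tau S a b) c = S.dot b (S.dot a c) := by
  rw [S.cond, ri S a]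

lemma tau_comp (a b c : A) :
    tau S (a * tau S a b) c = tau S a (tau S b c) := by
  apply (S.bij (a * tau S a b)).1
  rw [ri, dot_comp, ri, ri]

/-- The skew brace multiplication from a skew cycle set. -/
noncomputable def circ (x y : A) : A := x * tau S x y

lemma circ_assoc (x y z : A) :
    circ S (circ S x y) z = circ S x (circ S y z) := by
  unfold circ
  rw [tau_comp, tau_mul, mul_assoc]

lemma one_circ (x : A) : circ S 1 x = x := by
  unfold circ; rw [tau_one_left, one_mul]

lemma circ_one (x : A) : circ S x 1 = x := by
  unfold circ; rw [tau_one, mul_one]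

lemma circ_rinv (x : A) : circ S x (S.dot x x⁻¹) = 1 := by
  unfold circ; rw [li S x x⁻¹, mul_inv_cancel]

lemma circ_linv (a : A) : circ S (S.dot a a⁻¹) a = 1 := by
  set b := S.dot a a⁻¹ with hb
  set c := S.dot b b⁻¹ with hc
  have hab : circ S a b = 1 := circ_rinv S a
  have hbc : circ S b c = 1 := circ_rinv S b
  calc circ S b a = circ S (circ S b a) 1 := (circ_one S _).symm
    _ = circ S (circ S b a) (circ S b c) := by rw [hbc]
    _ = circ S b (circ S a (circ S b c)) := by rw [circ_assoc]
    _ = circ S b (circ S (circ S a b) c) := by rw [circ_assoc]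
    _ = circ S b (circ S 1 c) := by rw [hab]
    _ = circ S b c := by rw [one_circ]
    _ = 1 := hbc

lemma circ_compat (a b c : A) :
    circ S a (b * c) = circ S a b * a⁻¹ * circ S a c := by
  unfold circ
  rw [tau_mul]
  group

end SkewCycleSetAux

/-- Every skew brace gives a skew cycle set via `a • b = λ_a⁻¹(b) = ā ∘ (a·b)`, and
conversely every skew cycle set gives a skew brace via `a ∘ b = a · (a * b)` where
`*` is the inverse operation of `•`. -/
theorem skewBrace_equiv_skewCycleSet {A : Type*} [Group A] :
    (∀ B : SkewBrace A, ∃ S : SkewCycleSet A,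
      ∀ a b : A, S.dot a b = B.circ (B.cinv a) (a * b)) ∧
    (∀ S : SkewCycleSet A, ∃ B : SkewBrace A,
      ∀ a b : A, B.circ a b = a * Function.invFun (S.dot a) b) := by
  constructor
  · intro B
    open SkewBraceAux in
    refine ⟨⟨fun a b => B.circ (B.cinv a) (a * b), ?_, ?_, ?_⟩, fun a b => rfl⟩
    · intro a
      refine Function.bijective_iff_has_inverse.mpr ⟨lam B a, fun b => ?_, fun b => ?_⟩
      · simp only
        rw [dot_eq_lam, lam_cancel]
      · simp only
        rw [dot_eq_lam, lam_cancel']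
    · intro a b c
      rw [dot_eq_lam, dot_eq_lam, dot_eq_lam, lam_mul]
    · intro a b c
      rw [dot_eq_lam, dot_eq_lam, dot_eq_lam, dot_eq_lam]
      have h1 : a * b = B.circ a (lam B (B.cinv a) b) := (key B a b).symm
      have h2 : B.cinv (a * b) = B.circ (B.cinv (lam B (B.cinv a) b)) (B.cinv a) := by
        rw [h1, cinv_circ_mul]
      rw [h2, ← lam_comp]
  · intro S
    open SkewCycleSetAux in
    exact ⟨⟨circ S, circ_assoc S, 1, one_circ S, circ_one S,
      fun a => S.dot a a⁻¹, circ_linv S, circ_rinv S, circ_compat S⟩,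
      fun a b => rfl⟩
end
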